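/- For every integer m ≥ 1, every integer r ≥ 2, every vector a = (a_1,…,a_r) of nonzero real numbers with a_1 + a_2 ≠ 0, and all x, x_3,…,x_r ∈ ℝ, one has ζ_fml(1−m, a, (x, x, x_3,…,x_r)) = ζ_fml(1−m, (a_1, a_1+a_2, a_3,…,a_r), (1, x, x_3,…,x_r)) + ζ_fml(1−m, (a_1+a_2, a_2, a_3,…,a_r), (x, 1, x_3,…,x_r)) + ζ_fml(1−m, (a_1+a_2, a_3,…,a_r), (x, x_3,…,x_r)). -/

import Mathlib

open scoped BigOperators

/-- The formal multiple zeta value `zetaFml m a x = ζ_fml(1 - m, a, x)` of the paper: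
`(-1)^r (m-1)! ∑_{l, Σ l i = m + r - 1} ∏_i B_{l i}(x i) * (a i)^(l i - 1) / (l i)!`,
where `B_l` is the `l`-th Bernoulli polynomial (normalized with `B₁(X) = X - 1/2`)
and `(a i)^(l i - 1)` is an integer (`zpow`) power. -/
noncomputable def zetaFml (m : ℕ) {r : ℕ} (a x : Fin r → ℝ) : ℝ :=
  (-1 : ℝ) ^ r * (Nat.factorial (m - 1)) *
    ∑ l ∈ Finset.Nat.antidiagonalTuple r (m + r - 1),
      ∏ i, Polynomial.aeval (x i) (Polynomial.bernoulli (l i)) * a i ^ ((l i : ℤ) - 1)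
        / (Nat.factorial (l i))

namespace ZetaConeAux

open PowerSeries Polynomial Finset

/-! ### Power series part -/

noncomputable def Gps (a x : ℝ) : PowerSeries ℝ :=
  PowerSeries.mk fun n => Polynomial.aeval x (Polynomial.bernoulli n) * a ^ ((n : ℤ) - 1)
    / (Nat.factorial n)

lemma C_mul_Gps (a x : ℝ) (ha : a ≠ 0) :
    PowerSeries.C a * Gps a x
      = rescale a (PowerSeries.mk fun n =>
          aeval x ((1 / n.factorial : ℚ) • Polynomial.bernoulli n)) := by
  ext n
  simp only [Gps, PowerSeries.coeff_C_mul, coeff_rescale, PowerSeries.coeff_mk, map_smul]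
  rw [zpow_sub_one₀ ha, zpow_natCast, Rat.smul_def]
  have hf : (n.factorial : ℝ) ≠ 0 := by positivity
  push_cast
  field_simp

lemma Gps_mul (a x : ℝ) (ha : a ≠ 0) :
    Gps a x * (rescale a (exp ℝ) - 1) = PowerSeries.X * rescale (x * a) (exp ℝ) := by
  have h := congrArg (rescale a) (bernoulli_generating_function (A := ℝ) x)
  rw [map_mul, map_sub, map_one, map_mul, rescale_X, rescale_rescale] at h
  rw [← C_mul_Gps a x ha] at h
  have hC : (PowerSeries.C a) ≠ 0 := by
    intro hc
    apply ha
    simpa using congrArg (PowerSeries.constantCoeff) hc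
  apply mul_left_cancel₀ hC
  linear_combination h

lemma Dne (t : ℝ) (ht : t ≠ 0) : rescale t (exp ℝ) - 1 ≠ 0 := by
  intro h
  apply ht
  have h1 := congrArg (PowerSeries.coeff 1) h
  simpa [coeff_rescale, PowerSeries.coeff_exp, PowerSeries.coeff_one] using h1

lemma key (a₁ a₂ x : ℝ) (h1 : a₁ ≠ 0) (h2 : a₂ ≠ 0) (hc : a₁ + a₂ ≠ 0) :
    Gps a₁ x * Gps a₂ x + PowerSeries.X * Gps (a₁ + a₂) x
      = Gps a₁ 1 * Gps (a₁ + a₂) x + Gps (a₁ + a₂) x * Gps a₂ 1 := by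
  have g1 := Gps_mul a₁ x h1
  have g2 := Gps_mul a₂ x h2
  have gc := Gps_mul (a₁ + a₂) x hc
  have g1' := Gps_mul a₁ 1 h1
  have g2' := Gps_mul a₂ 1 h2
  rw [one_mul] at g1' g2'
  have m1 : rescale (x * a₁) (exp ℝ) * rescale (x * a₂) (exp ℝ)
      = rescale (x * (a₁ + a₂)) (exp ℝ) := by
    rw [mul_add]; exact exp_mul_exp_eq_exp_add _ _
  have m2 : rescale a₁ (exp ℝ) * rescale a₂ (exp ℝ) = rescale (a₁ + a₂) (exp ℝ) :=
    exp_mul_exp_eq_exp_add _ _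
  apply mul_right_cancel₀ (mul_ne_zero (mul_ne_zero (Dne a₁ h1) (Dne a₂ h2)) (Dne _ hc))
  set D1 := rescale a₁ (exp ℝ) - 1
  set D2 := rescale a₂ (exp ℝ) - 1
  set Dc := rescale (a₁ + a₂) (exp ℝ) - 1
  set e1 := rescale (x * a₁) (exp ℝ)
  set e := rescale (x * (a₁ + a₂)) (exp ℝ)
  linear_combination (Gps a₂ x * D2 * Dc) * g1 + (PowerSeries.X * e1 * Dc) * g2
    + (PowerSeries.X * D1 * D2 - Gps a₁ 1 * D1 * D2 - Gps a₂ 1 * D2 * D1) * gc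
    - (PowerSeries.X * e * D2) * g1' - (PowerSeries.X * e * D1) * g2'
    + (PowerSeries.X ^ 2 * Dc) * m1 - (PowerSeries.X ^ 2 * e) * m2

/-! ### The coefficient functions -/

noncomputable def fB (a x : ℝ) (k : ℕ) : ℝ :=
  Polynomial.aeval x (Polynomial.bernoulli k) * a ^ ((k : ℤ) - 1) / (Nat.factorial k)

lemma head (a₁ a₂ x : ℝ) (h1 : a₁ ≠ 0) (h2 : a₂ ≠ 0) (hc : a₁ + a₂ ≠ 0) (n : ℕ) :
    (∑ pq ∈ Finset.HasAntidiagonal.antidiagonal n, fB a₁ x pq.1 * fB a₂ x pq.2)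
      + PowerSeries.coeff n (PowerSeries.X * Gps (a₁ + a₂) x)
    = (∑ pq ∈ Finset.HasAntidiagonal.antidiagonal n, fB a₁ 1 pq.1 * fB (a₁ + a₂) x pq.2)
      + ∑ pq ∈ Finset.HasAntidiagonal.antidiagonal n, fB (a₁ + a₂) x pq.1 * fB a₂ 1 pq.2 := by
  have h := congrArg (PowerSeries.coeff n) (key a₁ a₂ x h1 h2 hc)
  simpa only [map_add, PowerSeries.coeff_mul, Gps, PowerSeries.coeff_mk, fB] using h

/-! ### Combinatorial sum decompositions -/

lemma peel {M : Type*} [AddCommMonoid M] (k N : ℕ) (F : (Fin (k + 1) → ℕ) → M) :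
    ∑ l ∈ Finset.Nat.antidiagonalTuple (k + 1) N, F l
      = ∑ pw ∈ Finset.HasAntidiagonal.antidiagonal N, ∑ t ∈ Finset.Nat.antidiagonalTuple k pw.2,
          F (Fin.cons pw.1 t) := by
  rw [Finset.sum_sigma']
  refine Finset.sum_nbij' (i := fun l => ⟨(l 0, ∑ i, Fin.tail l i), Fin.tail l⟩)
    (j := fun pt => Fin.cons pt.1.1 pt.2) ?_ ?_ ?_ ?_ ?_
  · intro l hl
    rw [Finset.Nat.mem_antidiagonalTuple] at hl
    simp only [Finset.mem_sigma, Finset.HasAntidiagonal.mem_antidiagonal, Finset.Nat.mem_antidiagonalTuple]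
    refine ⟨?_, by trivial⟩
    rw [← hl, Fin.sum_univ_succ]
    rfl
  · rintro ⟨⟨p, w⟩, t⟩ hmem
    simp only [Finset.mem_sigma, Finset.HasAntidiagonal.mem_antidiagonal,
      Finset.Nat.mem_antidiagonalTuple] at hmem
    rw [Finset.Nat.mem_antidiagonalTuple, Fin.sum_univ_succ]
    simp only [Fin.cons_zero, Fin.cons_succ]
    omega
  · intro l _
    simp [Fin.cons_self_tail]
  · rintro ⟨⟨p, w⟩, t⟩ hmem
    simp only [Finset.mem_sigma, Finset.HasAntidiagonal.mem_antidiagonal,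
      Finset.Nat.mem_antidiagonalTuple] at hmem
    simp only [Fin.tail_cons, Fin.cons_zero]
    rw [hmem.2]
  · intro l _
    rw [Fin.cons_self_tail]

lemma reassoc {M : Type*} [AddCommMonoid M] (N : ℕ) (F : ℕ → ℕ → ℕ → M) :
    ∑ pw ∈ Finset.HasAntidiagonal.antidiagonal N, ∑ qv ∈ Finset.HasAntidiagonal.antidiagonal pw.2, F pw.1 qv.1 qv.2
      = ∑ kw ∈ Finset.HasAntidiagonal.antidiagonal N, ∑ pq ∈ Finset.HasAntidiagonal.antidiagonal kw.1, F pq.1 pq.2 kw.2 := by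
  rw [Finset.sum_sigma', Finset.sum_sigma']
  refine Finset.sum_nbij' (i := fun s => ⟨(s.1.1 + s.2.1, s.2.2), (s.1.1, s.2.1)⟩)
    (j := fun s => ⟨(s.2.1, s.2.2 + s.1.2), (s.2.2, s.1.2)⟩) ?_ ?_ ?_ ?_ ?_
  · rintro ⟨⟨p, w1⟩, ⟨q, w⟩⟩ hmem
    have h1 : p + w1 = N := Finset.HasAntidiagonal.mem_antidiagonal.mp (Finset.mem_sigma.mp hmem).1
    have h2 : q + w = w1 := Finset.HasAntidiagonal.mem_antidiagonal.mp (Finset.mem_sigma.mp hmem).2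
    exact Finset.mem_sigma.mpr ⟨Finset.HasAntidiagonal.mem_antidiagonal.mpr (show p + q + w = N by omega),
      Finset.HasAntidiagonal.mem_antidiagonal.mpr rfl⟩
  · rintro ⟨⟨k, w⟩, ⟨p, q⟩⟩ hmem
    have h1 : k + w = N := Finset.HasAntidiagonal.mem_antidiagonal.mp (Finset.mem_sigma.mp hmem).1
    have h2 : p + q = k := Finset.HasAntidiagonal.mem_antidiagonal.mp (Finset.mem_sigma.mp hmem).2
    exact Finset.mem_sigma.mpr ⟨Finset.HasAntidiagonal.mem_antidiagonal.mpr (show p + (q + w) = N by omega),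
      Finset.HasAntidiagonal.mem_antidiagonal.mpr rfl⟩
  · rintro ⟨⟨p, w1⟩, ⟨q, w⟩⟩ hmem
    have h2 : q + w = w1 := Finset.HasAntidiagonal.mem_antidiagonal.mp (Finset.mem_sigma.mp hmem).2
    subst h2
    rfl
  · rintro ⟨⟨k, w⟩, ⟨p, q⟩⟩ hmem
    have h2 : p + q = k := Finset.HasAntidiagonal.mem_antidiagonal.mp (Finset.mem_sigma.mp hmem).2
    subst h2
    rfl
  · rintro ⟨⟨p, w1⟩, ⟨q, w⟩⟩ _
    rfl

lemma peel2 (r N : ℕ) (G : Fin (r + 2) → ℕ → ℝ) :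
    ∑ l ∈ Finset.Nat.antidiagonalTuple (r + 2) N, ∏ i, G i (l i)
      = ∑ kw ∈ Finset.HasAntidiagonal.antidiagonal N,
          (∑ pq ∈ Finset.HasAntidiagonal.antidiagonal kw.1, G 0 pq.1 * G (Fin.succ 0) pq.2)
            * ∑ t ∈ Finset.Nat.antidiagonalTuple r kw.2, ∏ i, G i.succ.succ (t i) := by
  rw [peel]
  rw [Finset.sum_congr rfl (fun pw _ => peel r pw.2
    (fun t1 => ∏ i : Fin (r + 2), G i ((Fin.cons pw.1 t1 : Fin (r + 2) → ℕ) i)))]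
  simp only [Fin.prod_univ_succ, Fin.cons_zero, Fin.cons_succ]
  rw [Finset.sum_congr rfl (fun pw _ => Finset.sum_congr rfl (fun qv _ => by
    rw [← Finset.mul_sum, ← Finset.mul_sum]))]
  rw [reassoc N (fun p q w => G 0 p * (G (Fin.succ 0) q
    * ∑ t ∈ Finset.Nat.antidiagonalTuple r w, ∏ i : Fin r, G i.succ.succ (t i)))]
  refine Finset.sum_congr rfl fun kw _ => ?_
  rw [Finset.sum_mul]
  exact Finset.sum_congr rfl fun pq _ => by ring

lemma peel1 (r M : ℕ) (G : Fin (r + 1) → ℕ → ℝ) :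
    ∑ l ∈ Finset.Nat.antidiagonalTuple (r + 1) M, ∏ i, G i (l i)
      = ∑ pw ∈ Finset.HasAntidiagonal.antidiagonal M,
          G 0 pw.1 * ∑ t ∈ Finset.Nat.antidiagonalTuple r pw.2, ∏ i, G i.succ (t i) := by
  rw [peel]
  refine Finset.sum_congr rfl fun pw _ => ?_
  rw [Finset.mul_sum]
  refine Finset.sum_congr rfl fun t _ => ?_
  rw [Fin.prod_univ_succ]
  simp [Fin.cons_zero, Fin.cons_succ]

/-! ### Rewriting `zetaFml` -/

lemma zeta2 (m r : ℕ) (A Xv : Fin (r + 2) → ℝ) :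
    zetaFml m A Xv = (-1 : ℝ) ^ (r + 2) * (Nat.factorial (m - 1))
      * ∑ kw ∈ Finset.HasAntidiagonal.antidiagonal (m + r + 1),
          (∑ pq ∈ Finset.HasAntidiagonal.antidiagonal kw.1,
              fB (A 0) (Xv 0) pq.1 * fB (A (Fin.succ 0)) (Xv (Fin.succ 0)) pq.2)
            * ∑ t ∈ Finset.Nat.antidiagonalTuple r kw.2,
                ∏ i, fB (A i.succ.succ) (Xv i.succ.succ) (t i) := by
  have h := peel2 r (m + r + 1) (fun i k => fB (A i) (Xv i) k)
  rw [zetaFml, show m + (r + 2) - 1 = m + r + 1 from by omega]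
  exact congrArg (fun S => (-1 : ℝ) ^ (r + 2) * (Nat.factorial (m - 1)) * S) h

lemma zeta1 (m r : ℕ) (A Xv : Fin (r + 1) → ℝ) :
    zetaFml m A Xv = (-1 : ℝ) ^ (r + 1) * (Nat.factorial (m - 1))
      * ∑ pw ∈ Finset.HasAntidiagonal.antidiagonal (m + r),
          fB (A 0) (Xv 0) pw.1
            * ∑ t ∈ Finset.Nat.antidiagonalTuple r pw.2,
                ∏ i, fB (A i.succ) (Xv i.succ) (t i) := by
  have h := peel1 r (m + r) (fun i k => fB (A i) (Xv i) k)
  rw [zetaFml, show m + (r + 1) - 1 = m + r from by omega]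
  exact congrArg (fun S => (-1 : ℝ) ^ (r + 1) * (Nat.factorial (m - 1)) * S) h

lemma step (c x : ℝ) (M : ℕ) (T : ℕ → ℝ) :
    ∑ kw ∈ Finset.HasAntidiagonal.antidiagonal (M + 1),
        PowerSeries.coeff kw.1 (PowerSeries.X * Gps c x) * T kw.2
      = ∑ pw ∈ Finset.HasAntidiagonal.antidiagonal M, fB c x pw.1 * T pw.2 := by
  rw [Finset.Nat.sum_antidiagonal_eq_sum_range_succ_mk,
    Finset.Nat.sum_antidiagonal_eq_sum_range_succ_mk, Finset.sum_range_succ']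
  simp only [PowerSeries.coeff_succ_X_mul, PowerSeries.coeff_zero_X_mul, zero_mul, add_zero,
    Gps, PowerSeries.coeff_mk, Nat.succ_sub_succ_eq_sub, fB]

end ZetaConeAux

theorem zetaFml_cone_subdivision_diag (m : ℕ) (hm : 1 ≤ m) (r : ℕ) (a : Fin (r + 2) → ℝ)
    (ha : ∀ i, a i ≠ 0) (h12 : a 0 + a 1 ≠ 0) (x : ℝ) (x' : Fin r → ℝ) :
    zetaFml m a (Fin.cons x (Fin.cons x x'))
      = zetaFml m (Function.update a 1 (a 0 + a 1)) (Fin.cons 1 (Fin.cons x x'))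
        + zetaFml m (Function.update a 0 (a 0 + a 1)) (Fin.cons x (Fin.cons 1 x'))
        + zetaFml m (Fin.cons (a 0 + a 1) (fun i : Fin r => a i.succ.succ)) (Fin.cons x x') := by
  have h01 : (0 : Fin (r + 2)) ≠ 1 := by
    simp [Fin.ext_iff]
  have h10 : (1 : Fin (r + 2)) ≠ 0 := h01.symm
  have u1 : ∀ i : Fin r, Function.update a 1 (a 0 + a 1) i.succ.succ = a i.succ.succ :=
    fun i => Function.update_of_ne (by simp [Fin.ext_iff]) _ _
  have u0 : ∀ i : Fin r, Function.update a 0 (a 0 + a 1) i.succ.succ = a i.succ.succ :=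
    fun i => Function.update_of_ne (by simp [Fin.ext_iff]) _ _
  have c1 : ∀ (y : ℝ) (z : Fin (r + 1) → ℝ), (Fin.cons y z : Fin (r + 2) → ℝ) 1 = z 0 :=
    fun y z => by rw [← Fin.succ_zero_eq_one, Fin.cons_succ]
  rw [ZetaConeAux.zeta2 m r a (Fin.cons x (Fin.cons x x')),
    ZetaConeAux.zeta2 m r (Function.update a 1 (a 0 + a 1)) (Fin.cons 1 (Fin.cons x x')),
    ZetaConeAux.zeta2 m r (Function.update a 0 (a 0 + a 1)) (Fin.cons x (Fin.cons 1 x')),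
    ZetaConeAux.zeta1 m r (Fin.cons (a 0 + a 1) fun i : Fin r => a i.succ.succ) (Fin.cons x x')]
  simp only [Fin.cons_succ, Fin.cons_zero, Fin.succ_zero_eq_one, c1, u1, u0,
    Function.update_self, Function.update_of_ne h01, Function.update_of_ne h10]
  have hkey : (∑ kw ∈ Finset.HasAntidiagonal.antidiagonal (m + r + 1),
        (∑ pq ∈ Finset.HasAntidiagonal.antidiagonal kw.1, ZetaConeAux.fB (a 0) x pq.1 * ZetaConeAux.fB (a 1) x pq.2)
          * ∑ t ∈ Finset.Nat.antidiagonalTuple r kw.2, ∏ i, ZetaConeAux.fB (a i.succ.succ) (x' i) (t i))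
      + ∑ kw ∈ Finset.HasAntidiagonal.antidiagonal (m + r + 1),
          PowerSeries.coeff kw.1 (PowerSeries.X * ZetaConeAux.Gps (a 0 + a 1) x)
            * ∑ t ∈ Finset.Nat.antidiagonalTuple r kw.2, ∏ i, ZetaConeAux.fB (a i.succ.succ) (x' i) (t i)
      = (∑ kw ∈ Finset.HasAntidiagonal.antidiagonal (m + r + 1),
          (∑ pq ∈ Finset.HasAntidiagonal.antidiagonal kw.1, ZetaConeAux.fB (a 0) 1 pq.1 * ZetaConeAux.fB (a 0 + a 1) x pq.2)
            * ∑ t ∈ Finset.Nat.antidiagonalTuple r kw.2, ∏ i, ZetaConeAux.fB (a i.succ.succ) (x' i) (t i))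
        + ∑ kw ∈ Finset.HasAntidiagonal.antidiagonal (m + r + 1),
            (∑ pq ∈ Finset.HasAntidiagonal.antidiagonal kw.1, ZetaConeAux.fB (a 0 + a 1) x pq.1 * ZetaConeAux.fB (a 1) 1 pq.2)
              * ∑ t ∈ Finset.Nat.antidiagonalTuple r kw.2, ∏ i, ZetaConeAux.fB (a i.succ.succ) (x' i) (t i) := by
    rw [← Finset.sum_add_distrib, ← Finset.sum_add_distrib]
    refine Finset.sum_congr rfl fun kw _ => ?_
    rw [← add_mul, ← add_mul]
    exact congrArg (· * ∑ t ∈ Finset.Nat.antidiagonalTuple r kw.2,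
      ∏ i, ZetaConeAux.fB (a i.succ.succ) (x' i) (t i)) (ZetaConeAux.head (a 0) (a 1) x (ha 0) (ha 1) h12 kw.1)
  have hstep := ZetaConeAux.step (a 0 + a 1) x (m + r)
    (fun w => ∑ t ∈ Finset.Nat.antidiagonalTuple r w, ∏ i, ZetaConeAux.fB (a i.succ.succ) (x' i) (t i))
  linear_combination ((-1 : ℝ) ^ (r + 2) * (Nat.factorial (m - 1) : ℝ)) * hkey
    - ((-1 : ℝ) ^ (r + 2) * (Nat.factorial (m - 1) : ℝ)) * hstep
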